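/- There exists a multi-agent problem with k = 3 agents (a finite nonempty set X of feasible solutions with nonnegative utility functions u_1, u_2, u_3), a proportional fair solution x_PF, and a maximin fair solution x_MM such that z(x_PF) < z(x_MM). Hence for three or more agents a proportional fair solution can have strictly smaller social utility than a maximin fair solution. -/

import Mathlib

/-- There is a multi-agent problem with `k = 3` agents, a proportional fair solution
`xPF` and a maximin fair solution `xMM` with `z(xPF) < z(xMM)`: for three agents a
proportional fair solution can have strictly smaller social utility than a maximin
fair solution. -/
theorem pf_lt_maximin_three_agents :
    ∃ (X : Type) (_ : Fintype X) (_ : Nonempty X) (u : Fin 3 → X → ℝ),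
      (∀ j x, 0 ≤ u j x) ∧
      ∃ xPF xMM : X,
        (∀ j, 0 < u j xPF) ∧
        (∀ y, ∑ j, u j y / u j xPF ≤ (3 : ℝ)) ∧
        (¬ ∃ y : X, (∀ j, u j xMM ≤ u j y) ∧ ∃ j, u j xMM < u j y) ∧
        (∀ y : X, min (u 0 y) (min (u 1 y) (u 2 y)) ≤
          min (u 0 xMM) (min (u 1 xMM) (u 2 xMM))) ∧
        (∑ j, u j xPF) < ∑ j, u j xMM := by
  refine ⟨Bool, inferInstance, inferInstance,
    fun j x => if x then ![6, 1, 1] j else ![4, 2, 1] j, ?_, false, true, ?_, ?_, ?_, ?_, ?_⟩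
  · intro j x
    fin_cases j <;> cases x <;> norm_num
  · intro j
    fin_cases j <;> norm_num
  · intro y
    cases y <;> simp [Fin.sum_univ_three] <;> norm_num
  · rintro ⟨y, hle, j, hlt⟩
    cases y
    · have := hle 0
      simp at this hlt ⊢
      fin_cases j <;> simp_all <;> linarith
    · fin_cases j <;> simp at hlt
  · intro y
    cases y <;> norm_num [Matrix.cons_val_zero, Matrix.cons_val_one, Matrix.cons_val_two, Matrix.head_cons, Matrix.tail_cons]
  · simp [Fin.sum_univ_three]; norm_num
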